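/- Let G be a finite solvable group. If for every prime p every Sylow p-subgroup of G has a basis, then G has a basis. -/

import Mathlib

open Subgroup

universe u


/-- A sequence `b : Fin n → G` of non-identity elements is a *basis* for the group `G`
if every `g ∈ G` is uniquely of the form `b 0 ^ a 0 * ⋯ * b (n-1) ^ a (n-1)`
with `a i ∈ {0, …, orderOf (b i) - 1}`. -/
def IsGroupBasis {G : Type*} [Group G] {n : ℕ} (b : Fin n → G) : Prop :=
  (∀ i, b i ≠ 1) ∧
    Function.Bijective (fun a : ∀ i, Fin (orderOf (b i)) =>
      (List.ofFn fun i => b i ^ ((a i : ℕ))).prod)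

/-- `G` has a basis. -/
def HasGroupBasis (G : Type*) [Group G] : Prop :=
  ∃ (n : ℕ) (b : Fin n → G), IsGroupBasis b

section Transfer

theorem IsGroupBasis.mulEquiv {G H : Type*} [Group G] [Group H] (e : G ≃* H) {n : ℕ}
    {b : Fin n → G} (hb : IsGroupBasis b) : IsGroupBasis (fun i => e (b i)) := by
  have horder : ∀ i, orderOf (e (b i)) = orderOf (b i) := fun i =>
    orderOf_injective e.toMonoidHom e.injective _
  constructor
  · intro i h
    exact hb.1 i (by simpa using h)
  · have key : (fun a : ∀ i, Fin (orderOf (e (b i))) =>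
        (List.ofFn fun i => e (b i) ^ ((a i : ℕ))).prod)
        = e ∘ (fun a : ∀ i, Fin (orderOf (b i)) =>
            (List.ofFn fun i => b i ^ ((a i : ℕ))).prod)
          ∘ (fun a i => Fin.cast (horder i) (a i)) := by
      funext a
      simp only [Function.comp_apply, map_list_prod, List.map_ofFn]
      exact congrArg List.prod (congrArg List.ofFn (funext fun i => by
        simp [Function.comp, map_pow]))
    rw [key]
    exact e.bijective.comp (hb.2.comp
      (Equiv.piCongrRight fun i => finCongr (horder i).symm).symm.bijective)

theorem HasGroupBasis.of_mulEquiv {G H : Type*} [Group G] [Group H] (e : G ≃* H)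
    (h : HasGroupBasis G) : HasGroupBasis H := by
  obtain ⟨n, b, hb⟩ := h
  exact ⟨n, _, hb.mulEquiv e⟩

theorem hasGroupBasis_of_subsingleton (G : Type*) [Group G] [Subsingleton G] :
    HasGroupBasis G := by
  refine ⟨0, Fin.elim0, fun i => i.elim0, ?_, fun g => ?_⟩
  · intro a a' _
    funext i
    exact i.elim0
  · exact ⟨fun i => i.elim0, Subsingleton.elim _ _⟩

end Transfer

theorem hasGroupBasis_of_isComplement' {G : Type*} [Group G] [Finite G] {H K : Subgroup G}
    (hc : Subgroup.IsComplement' H K) (hH : HasGroupBasis H) (hK : HasGroupBasis K) :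
    HasGroupBasis G := by
  obtain ⟨m, b, hb1, hb2⟩ := hH
  obtain ⟨k, c, hc1, hc2⟩ := hK
  set d : Fin (m + k) → G := Fin.append (fun i => (b i : G)) (fun j => (c j : G)) with hd
  have hdl : ∀ i, d (Fin.castAdd k i) = (b i : G) := fun i => Fin.append_left _ _ i
  have hdr : ∀ j, d (Fin.natAdd m j) = (c j : G) := fun j => Fin.append_right _ _ j
  have hob : ∀ i, orderOf (d (Fin.castAdd k i)) = orderOf (b i) := fun i => by
    rw [hdl i]; exact orderOf_submonoid (b i)
  have hoc : ∀ j, orderOf (d (Fin.natAdd m j)) = orderOf (c j) := fun j => by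
    rw [hdr j]; exact orderOf_submonoid (c j)
  -- the left/right parts of an exponent tuple
  let aL : (∀ i, Fin (orderOf (d i))) → ∀ i, Fin (orderOf (b i)) := fun a i =>
    ⟨(a (Fin.castAdd k i) : ℕ), (hob i) ▸ (a (Fin.castAdd k i)).isLt⟩
  let aR : (∀ i, Fin (orderOf (d i))) → ∀ j, Fin (orderOf (c j)) := fun a j =>
    ⟨(a (Fin.natAdd m j) : ℕ), (hoc j) ▸ (a (Fin.natAdd m j)).isLt⟩
  let FB : (∀ i, Fin (orderOf (b i))) → H := fun a => (List.ofFn fun i => b i ^ ((a i : ℕ))).prod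
  let FC : (∀ j, Fin (orderOf (c j))) → K := fun a => (List.ofFn fun j => c j ^ ((a j : ℕ))).prod
  have split : ∀ a : ∀ i, Fin (orderOf (d i)),
      (List.ofFn fun i => d i ^ ((a i : ℕ))).prod
        = (FB (aL a) : G) * (FC (aR a) : G) := by
    intro a
    rw [List.ofFn_add, List.prod_append]
    congr 1
    · show _ = (H.subtype (FB (aL a)))
      rw [map_list_prod, List.map_ofFn]
      exact congrArg List.prod (congrArg List.ofFn (funext fun i => by
        simp only [Function.comp_apply, map_pow, Subgroup.coe_subtype]
        rw [Subgroup.coe_pow, ← hdl i]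
        rfl))
    · show _ = (K.subtype (FC (aR a)))
      rw [map_list_prod, List.map_ofFn]
      exact congrArg List.prod (congrArg List.ofFn (funext fun j => by
        simp only [Function.comp_apply, map_pow, Subgroup.coe_subtype, hdr j]
        rfl))
  refine ⟨m + k, d, ?_, ?_⟩
  · intro i
    refine Fin.addCases (fun i => ?_) (fun j => ?_) i
    · rw [hdl i]
      simpa using hb1 i
    · rw [hdr j]
      simpa using hc1 j
  · rw [Nat.bijective_iff_injective_and_card]
    constructor
    · intro a a' hAA
      have h2 : (FB (aL a) : G) * (FC (aR a) : G) = (FB (aL a') : G) * (FC (aR a') : G) := by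
        rw [← split a, ← split a']; exact hAA
      have h3 := hc.1 (a₁ := (⟨(FB (aL a) : G), (FB (aL a)).2⟩, ⟨(FC (aR a) : G), (FC (aR a)).2⟩))
        (a₂ := (⟨(FB (aL a') : G), (FB (aL a')).2⟩, ⟨(FC (aR a') : G), (FC (aR a')).2⟩)) h2
      have hB : FB (aL a) = FB (aL a') := by
        have := congrArg Prod.fst h3
        exact Subtype.ext (congrArg Subtype.val this)
      have hC : FC (aR a) = FC (aR a') := by
        have := congrArg Prod.snd h3
        exact Subtype.ext (congrArg Subtype.val this)
      have hBL : aL a = aL a' := hb2.1 hB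
      have hCR : aR a = aR a' := hc2.1 hC
      funext i
      refine Fin.addCases (fun i => ?_) (fun j => ?_) i
      · have hv : (aL a i).val = (aL a' i).val := congrArg Fin.val (congrFun hBL i)
        exact Fin.ext hv
      · have hv : (aR a j).val = (aR a' j).val := congrArg Fin.val (congrFun hCR j)
        exact Fin.ext hv
    · have cardH : Nat.card (∀ i, Fin (orderOf (b i))) = Nat.card H :=
        Nat.card_eq_of_bijective _ hb2
      have cardK : Nat.card (∀ j, Fin (orderOf (c j))) = Nat.card K :=
        Nat.card_eq_of_bijective _ hc2
      have : Nat.card (∀ i, Fin (orderOf (d i)))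
          = Nat.card (∀ i, Fin (orderOf (b i))) * Nat.card (∀ j, Fin (orderOf (c j))) := by
        simp only [Nat.card_eq_fintype_card, Fintype.card_pi, Fintype.card_fin]
        rw [Fin.prod_univ_add]
        congr 1
        · exact Finset.prod_congr rfl fun i _ => hob i
        · exact Finset.prod_congr rfl fun j _ => hoc j
      rw [this, cardH, cardK, hc.card_mul]

theorem exists_ne_bot_normal_pgroup (G : Type u) [Group G] [Finite G] [Group.IsSolvable G]
    [Nontrivial G] :
    ∃ q : ℕ, q.Prime ∧ ∃ N : Subgroup G, N.Normal ∧ N ≠ ⊥ ∧ IsPGroup q N := by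
  classical
  have hex : ∃ n, derivedSeries G n = ⊥ := Group.IsSolvable.solvable
  have h0 : Nat.find hex ≠ 0 := by
    intro h
    have := Nat.find_spec hex
    rw [h, derivedSeries_zero] at this
    exact top_ne_bot this
  obtain ⟨j, hj⟩ := Nat.exists_eq_succ_of_ne_zero h0
  set A := derivedSeries G j with hA
  have hAbot : A ≠ ⊥ := Nat.find_min hex (by omega)
  have hcommbot : ⁅A, A⁆ = ⊥ := by
    have := Nat.find_spec hex
    rw [hj, derivedSeries_succ] at this
    exact this
  have h2 : A ≤ Subgroup.centralizer A := commutator_eq_bot_iff_le_centralizer.mp hcommbot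
  have hcomm : ∀ x y : A, (x : G) * y = (y : G) * x := fun x y =>
    Subgroup.mem_centralizer_iff.mp (h2 y.2) x x.2
  have hA1 : 1 < Nat.card A := (Subgroup.one_lt_card_iff_ne_bot A).mpr hAbot
  set q := (Nat.card A).minFac with hqdef
  have hq : q.Prime := Nat.minFac_prime (by omega)
  haveI : Fact q.Prime := ⟨hq⟩
  have hqdvd : q ∣ Nat.card A := Nat.minFac_dvd _
  obtain ⟨Q⟩ : Nonempty (Sylow q A) := Sylow.nonempty
  have hQn : (Q : Subgroup A).Normal := by
    constructor
    intro x hx g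
    have hgx : g * x * g⁻¹ = x := by
      rw [Subtype.ext_iff]
      push_cast
      rw [hcomm g x]
      group
    rw [hgx]
    exact hx
  haveI : A.Normal := derivedSeries_normal G j
  haveI : (Q : Subgroup A).Characteristic := Sylow.characteristic_of_normal Q hQn
  refine ⟨q, hq, (Q : Subgroup A).map A.subtype, inferInstance, ?_, ?_⟩
  · rw [Ne, Subgroup.map_eq_bot_iff_of_injective _ A.subtype_injective]
    exact Q.ne_bot_of_dvd_card hqdvd
  · exact Q.2.map A.subtype

theorem exists_hall {p : ℕ} (hp : p.Prime) :
    ∀ (n : ℕ) (G : Type u) [Group G] [Finite G] [Group.IsSolvable G], Nat.card G ≤ n →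
      ∃ H : Subgroup G, Nat.card H = ordCompl[p] (Nat.card G) := by
  intro n
  induction n with
  | zero => intro G _ _ _ hle; exact absurd hle (by simpa using Nat.card_pos.ne')
  | succ n ih =>
    intro G _ _ _ hle
    have hG0 : Nat.card G ≠ 0 := Nat.card_pos.ne'
    by_cases hpd : p ∣ Nat.card G
    · haveI : Nontrivial G := by
        rw [← Finite.one_lt_card_iff_nontrivial]
        have h1 := Nat.le_of_dvd Nat.card_pos hpd
        have h2 := hp.two_le
        omega
      obtain ⟨q, hq, N, hNnorm, hNbot, hNp⟩ := exists_ne_bot_normal_pgroup G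
      haveI := hNnorm
      haveI : Fact q.Prime := ⟨hq⟩
      obtain ⟨kk, hNcard⟩ := IsPGroup.iff_card.mp hNp
      have hN1 : 1 < Nat.card N := (Subgroup.one_lt_card_iff_ne_bot N).mpr hNbot
      have hGQ : Nat.card G = Nat.card (G ⧸ N) * Nat.card N :=
        Subgroup.card_eq_card_quotient_mul_card_subgroup N
      have hQlt : Nat.card (G ⧸ N) < Nat.card G := by
        have h1 : 0 < Nat.card (G ⧸ N) := Nat.card_pos
        nlinarith [hGQ, hN1, h1]
      obtain ⟨H', hH'⟩ := ih (G ⧸ N) (by omega)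
      set K := H'.comap (QuotientGroup.mk' N) with hKdef
      have hKcard : Nat.card K = Nat.card H' * Nat.card N := by
        have e1 : Nat.card K * K.index = Nat.card G := Subgroup.card_mul_index K
        have e2 : K.index = H'.index :=
          Subgroup.index_comap_of_surjective _ (QuotientGroup.mk'_surjective N)
        have e3 : Nat.card H' * H'.index = Nat.card (G ⧸ N) := Subgroup.card_mul_index H'
        have e4 : H'.index ≠ 0 := Subgroup.index_ne_zero_of_finite
        have e5 : Nat.card K * H'.index = (Nat.card H' * Nat.card N) * H'.index := by
          rw [e2] at e1
          rw [e1, hGQ, ← e3]; ring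
        exact Nat.eq_of_mul_eq_mul_right (Nat.pos_of_ne_zero e4) e5
      have hcomplmul : ordCompl[p] (Nat.card G)
          = ordCompl[p] (Nat.card (G ⧸ N)) * ordCompl[p] (Nat.card N) := by
        rw [hGQ, Nat.ordCompl_mul]
      by_cases hqp : q = p
      · subst hqp
        set m := ordCompl[q] (Nat.card G) with hm
        have hNordCompl : ordCompl[q] (Nat.card N) = 1 := by
          rw [hNcard, hp.factorization_pow, Finsupp.single_eq_same,
            Nat.div_self (pow_pos hp.pos _)]
        have hKm : Nat.card K = Nat.card N * m := by
          rw [hKcard, hH', hcomplmul, hNordCompl]; ring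
        have hKdvd : Nat.card K ∣ Nat.card G := Subgroup.card_subgroup_dvd_card K
        rcases lt_or_eq_of_le (Nat.le_of_dvd Nat.card_pos hKdvd) with h | h
        · obtain ⟨H'', hH''⟩ := ih K (by omega)
          refine ⟨H''.map K.subtype, ?_⟩
          have hcongr : Nat.card (H''.map K.subtype) = Nat.card H'' :=
            (Nat.card_congr (Subgroup.equivMapOfInjective H'' K.subtype
              K.subtype_injective).toEquiv).symm
          have hqm : ¬ q ∣ m := by rw [hm]; exact Nat.not_dvd_ordCompl hp hG0
          rw [hcongr, hH'', hKm, Nat.ordCompl_mul, hNordCompl, one_mul,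
            Nat.factorization_eq_zero_of_not_dvd hqm, pow_zero, Nat.div_one]
        · -- N is a normal Sylow q-subgroup; apply Schur–Zassenhaus
          have hidx : Nat.card N * N.index = Nat.card G := Subgroup.card_mul_index N
          have hNidx : N.index = m :=
            Nat.eq_of_mul_eq_mul_left Nat.card_pos (by rw [hidx, ← h, hKm])
          have hcop : Nat.Coprime (Nat.card N) N.index := by
            rw [hNidx, hm, hNcard]
            exact (Nat.coprime_ordCompl hp hG0).pow_left kk
          obtain ⟨Hc, hHc⟩ := Subgroup.exists_right_complement'_of_coprime hcop
          refine ⟨Hc, Nat.eq_of_mul_eq_mul_left (Nat.card_pos (α := N)) ?_⟩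
          rw [hHc.card_mul, ← h, hKm]
      · refine ⟨K, ?_⟩
        have hnd : ¬ p ∣ Nat.card N := by
          intro hdvd
          rw [hNcard] at hdvd
          exact hqp ((Nat.prime_dvd_prime_iff_eq hp hq).mp (hp.dvd_of_dvd_pow hdvd)).symm
        have hNid : ordCompl[p] (Nat.card N) = Nat.card N := by
          rw [Nat.factorization_eq_zero_of_not_dvd hnd, pow_zero, Nat.div_one]
        rw [hKcard, hH', hcomplmul, hNid]
    · refine ⟨⊤, ?_⟩
      rw [Nat.factorization_eq_zero_of_not_dvd hpd, pow_zero, Nat.div_one]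
      exact Nat.card_congr Subgroup.topEquiv.toEquiv

theorem hasGroupBasis_of_card_le {n : ℕ} :
    ∀ (G : Type u) [Group G] [Finite G] [Group.IsSolvable G], Nat.card G ≤ n →
      (∀ p : ℕ, p.Prime → ∀ P : Sylow p G, HasGroupBasis (P : Subgroup G)) →
      HasGroupBasis G := by
  induction n with
  | zero => intro G _ _ _ hle _; exact absurd hle (by simpa using Nat.card_pos.ne')
  | succ n ih =>
    intro G _ _ _ hle hSyl
    rcases subsingleton_or_nontrivial G with hsub | hnt
    · exact hasGroupBasis_of_subsingleton G
    · have hG0 : Nat.card G ≠ 0 := Nat.card_pos.ne'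
      have hG1 : 1 < Nat.card G := Finite.one_lt_card
      set p := (Nat.card G).minFac with hpdef
      have hp : p.Prime := Nat.minFac_prime (by omega)
      haveI : Fact p.Prime := ⟨hp⟩
      have hpd : p ∣ Nat.card G := Nat.minFac_dvd _
      obtain ⟨H, hHcard⟩ := exists_hall hp (Nat.card G) G le_rfl
      obtain ⟨P⟩ : Nonempty (Sylow p G) := Sylow.nonempty
      have hPcard : Nat.card P = p ^ (Nat.card G).factorization p := P.card_eq_multiplicity
      have hmul : Nat.card (P : Subgroup G) * Nat.card H = Nat.card G := by
        rw [hPcard, hHcard]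
        exact Nat.ordProj_mul_ordCompl_eq_self (Nat.card G) p
      have hcop : Nat.Coprime (Nat.card (P : Subgroup G)) (Nat.card H) := by
        rw [hPcard, hHcard]
        exact (Nat.coprime_ordCompl hp hG0).pow_left _
      have hcomp : Subgroup.IsComplement' (P : Subgroup G) H :=
        Subgroup.isComplement'_of_coprime hmul hcop
      -- `H` is strictly smaller than `G`
      have hHlt : Nat.card H < Nat.card G := by
        have hpf : 0 < (Nat.card G).factorization p :=
          (Nat.Prime.factorization_pos_of_dvd hp hG0 hpd)
        have h2 : 1 < p ^ (Nat.card G).factorization p :=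
          Nat.one_lt_pow hpf.ne' hp.one_lt
        have h3 : 0 < Nat.card H := Nat.card_pos
        nlinarith [hmul]
      -- Sylow subgroups of `H` have bases
      have hSylH : ∀ q : ℕ, q.Prime → ∀ Q : Sylow q H, HasGroupBasis (Q : Subgroup H) := by
        intro q hq Q
        haveI : Fact q.Prime := ⟨hq⟩
        by_cases hdvd : q ∣ Nat.card H
        · have hqp : q ≠ p := by
            intro h
            rw [hHcard] at hdvd
            exact Nat.not_dvd_ordCompl hp hG0 (h ▸ hdvd)
          have hfq : (Nat.card H).factorization q = (Nat.card G).factorization q := by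
            rw [hHcard, Nat.factorization_ordCompl]
            exact Finsupp.erase_ne hqp
          have hQcard : Nat.card ((Q : Subgroup H).map H.subtype)
              = q ^ (Nat.card G).factorization q := by
            rw [(Nat.card_congr (Subgroup.equivMapOfInjective (Q : Subgroup H) H.subtype
              H.subtype_injective).toEquiv).symm, Q.card_eq_multiplicity, hfq]
          have hbasis := hSyl q hq (Sylow.ofCard _ hQcard)
          exact HasGroupBasis.of_mulEquiv
            (Subgroup.equivMapOfInjective (Q : Subgroup H) H.subtype H.subtype_injective).symm
            hbasis
        · have hQ1 : Nat.card (Q : Subgroup H) = 1 := by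
            rw [Q.card_eq_multiplicity, Nat.factorization_eq_zero_of_not_dvd hdvd, pow_zero]
          haveI : Subsingleton (Q : Subgroup H) :=
            (Nat.card_eq_one_iff_unique.mp hQ1).1
          exact hasGroupBasis_of_subsingleton _
      have hbasisH : HasGroupBasis H := ih H (by omega) hSylH
      have hbasisP : HasGroupBasis (P : Subgroup G) := hSyl p hp P
      exact hasGroupBasis_of_isComplement' hcomp hbasisP hbasisH

/-- If `G` is a finite solvable group all of whose Sylow subgroups have bases,
then `G` has a basis. -/

theorem hasGroupBasis_of_solvable {G : Type*} [Group G] [Finite G] [Group.IsSolvable G]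
    (hSyl : ∀ p : ℕ, p.Prime → ∀ P : Sylow p G, HasGroupBasis (P : Subgroup G)) :
    HasGroupBasis G :=
  hasGroupBasis_of_card_le G le_rfl hSyl
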